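/- Let C and C' be full triangulated subcategories of a triangulated category D such that the Yoneda functor C' → (additive functors C^op → Ab), M ↦ Hom_D(−, M)|_C, is fully faithful ('C reflects C''). Let w be a weight structure on C. If a t-structure t on C' is right orthogonal to w (i.e., Hom_D(C_{w≤0}, C'_{t≥1}) = 0 and Hom_D(C_{w≥0}, C'_{t≤-1}) = 0), then t is strictly right orthogonal to w: C'_{t≥1} = {N ∈ C' : Hom_D(X, N) = 0 for all X ∈ C_{w≤0}} and C'_{t≤-1} = {N ∈ C' : Hom_D(X, N) = 0 for all X ∈ C_{w≥0}}. -/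

import Mathlib

open CategoryTheory Category Limits Pretriangulated ZeroObject Opposite

universe v u u₂ v₂

variable (C : Type u) [Category.{v} C] [Preadditive C] [HasZeroObject C]
  [HasShift C ℤ] [∀ n : ℤ, (CategoryTheory.shiftFunctor C n).Additive] [Pretriangulated C]

/-- `X` is a retract (direct summand) of `Y`. -/
def IsRetract {C : Type u} [Category.{v} C] (X Y : C) : Prop :=
  ∃ (s : X ⟶ Y) (r : Y ⟶ X), s ≫ r = 𝟙 X

/-- A weight structure on a pretriangulated category `C`, in the homological convention:
`le` is the class `C_{w≤0}` and `ge` is the class `C_{w≥0}`. -/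
structure WeightStructure where
  le : Set C
  ge : Set C
  le_retract : ∀ ⦃X Y : C⦄, IsRetract X Y → Y ∈ le → X ∈ le
  ge_retract : ∀ ⦃X Y : C⦄, IsRetract X Y → Y ∈ ge → X ∈ ge
  le_shift : ∀ X : C, X ∈ le → X⟦(-1 : ℤ)⟧ ∈ le
  ge_shift : ∀ X : C, X ∈ ge → X⟦(1 : ℤ)⟧ ∈ ge
  orth : ∀ ⦃X Y : C⦄, X ∈ le → Y ∈ ge → ∀ f : X ⟶ Y⟦(1 : ℤ)⟧, f = 0
  decomp : ∀ M : C, ∃ (L R : C) (f : L ⟶ M) (g : M ⟶ R) (h : R ⟶ L⟦(1 : ℤ)⟧),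
    Triangle.mk f g h ∈ (distTriang C) ∧ L ∈ le ∧ R⟦(-1 : ℤ)⟧ ∈ ge

/-- A t-structure on a pretriangulated category `C`, in the homological convention:
`le` is the class `C_{t≤0}` and `ge` is the class `C_{t≥0}`. -/
structure HomTStructure where
  le : Set C
  ge : Set C
  le_iso : ∀ ⦃X Y : C⦄, (X ≅ Y) → Y ∈ le → X ∈ le
  ge_iso : ∀ ⦃X Y : C⦄, (X ≅ Y) → Y ∈ ge → X ∈ ge
  le_shift : ∀ X : C, X ∈ le → X⟦(-1 : ℤ)⟧ ∈ le
  ge_shift : ∀ X : C, X ∈ ge → X⟦(1 : ℤ)⟧ ∈ ge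
  orth : ∀ ⦃X Y : C⦄, X⟦(-1 : ℤ)⟧ ∈ ge → Y ∈ le → ∀ f : X ⟶ Y, f = 0
  decomp : ∀ M : C, ∃ (L R : C) (f : L ⟶ M) (g : M ⟶ R) (h : R ⟶ L⟦(1 : ℤ)⟧),
    Triangle.mk f g h ∈ (distTriang C) ∧ L ∈ ge ∧ R⟦(1 : ℤ)⟧ ∈ le

/-- A contravariant additive functor is cohomological if it sends distinguished
triangles to exact sequences. -/
def IsCohomological {A : Type u₂} [Category.{v₂} A] [Abelian A]
    (H : Cᵒᵖ ⥤ A) [H.Additive] : Prop :=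
  ∀ (T : Triangle C), ∀ hT : T ∈ distTriang C,
    (ShortComplex.mk (H.map T.mor₂.op) (H.map T.mor₁.op) (by
      rw [← H.map_comp, ← op_comp, comp_distTriang_mor_zero₁₂ _ hT, op_zero, H.map_zero])).Exact

universe u₃ u₄

variable {D : Type u₃} [Category.{v} D] [Preadditive D] [HasZeroObject D]
  [HasShift D ℤ] [∀ n : ℤ, (CategoryTheory.shiftFunctor D n).Additive] [Pretriangulated D]
variable {C' : Type u₄} [Category.{v} C'] [Preadditive C'] [HasZeroObject C']
  [HasShift C' ℤ] [∀ n : ℤ, (CategoryTheory.shiftFunctor C' n).Additive] [Pretriangulated C']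

/-- The Yoneda-type functor sending M in C' to the functor Hom_D(i(−), i'(M)) on Cᵒᵖ. -/
def restrictedYoneda (i : C ⥤ D) (i' : C' ⥤ D) : C' ⥤ Cᵒᵖ ⥤ AddCommGrpCat.{v} :=
  i' ⋙ preadditiveYoneda ⋙ (Functor.whiskeringLeft Cᵒᵖ Dᵒᵖ AddCommGrpCat.{v}).obj i.op


section Auxiliary

variable {C}

/-- Internal characterization for t-structures: an object left-orthogonal to `t≤-1`
belongs to `t≥0`. -/
lemma HomTStructure.mem_ge_of_orth (t : HomTStructure C') {M : C'}
    (hM : ∀ B : C', B⟦(1 : ℤ)⟧ ∈ t.le → ∀ g : M ⟶ B, g = 0) : M ∈ t.ge := by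
  obtain ⟨L, B, f, g, h, hdist, hL, hB⟩ := t.decomp M
  have hg : g = 0 := hM B hB g
  obtain ⟨ψ, hψ⟩ := Triangle.yoneda_exact₃ _ hdist (𝟙 B)
    (by show g ≫ 𝟙 B = 0; rw [hg, zero_comp])
  have hψ0 : ψ = 0 := by
    refine t.orth ?_ ?_ ψ
    · exact t.ge_iso ((shiftFunctorCompIsoId C' (1 : ℤ) (-1 : ℤ) (by ring)).app L) hL
    · exact t.le_iso ((shiftFunctorCompIsoId C' (1 : ℤ) (-1 : ℤ) (by ring)).app B).symm
        (t.le_shift _ hB)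
  have hBzero : IsZero B := by
    rw [IsZero.iff_id_eq_zero, hψ, hψ0, comp_zero]; rfl
  have : IsIso ((Triangle.mk f g h).mor₁) :=
    (Triangle.isZero₃_iff_isIso₁ _ hdist).1 hBzero
  exact t.ge_iso (asIso ((Triangle.mk f g h).mor₁)).symm hL

/-- Internal characterization for t-structures: an object right-orthogonal to `t≥1`
belongs to `t≤0`. -/
lemma HomTStructure.mem_le_of_orth (t : HomTStructure C') {M : C'}
    (hM : ∀ A : C', A⟦(-1 : ℤ)⟧ ∈ t.ge → ∀ g : A ⟶ M, g = 0) : M ∈ t.le := by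
  obtain ⟨A, B, f, g, h, hdist, hA, hB⟩ := t.decomp (M⟦(-1 : ℤ)⟧)
  let e : (M⟦(-1 : ℤ)⟧)⟦(1 : ℤ)⟧ ≅ M :=
    (shiftFunctorCompIsoId C' (-1 : ℤ) (1 : ℤ) (by ring)).app M
  have hf : f = 0 := by
    have h1 : (shiftFunctor C' (1 : ℤ)).map f ≫ e.hom = 0 := by
      refine hM _ ?_ _
      exact t.ge_iso ((shiftFunctorCompIsoId C' (1 : ℤ) (-1 : ℤ) (by ring)).app A) hA
    have h2 : (shiftFunctor C' (1 : ℤ)).map f = 0 := by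
      have : (shiftFunctor C' (1 : ℤ)).map f =
          ((shiftFunctor C' (1 : ℤ)).map f ≫ e.hom) ≫ e.inv := by simp
      rw [this, h1, zero_comp]
    exact (shiftFunctor C' (1 : ℤ)).zero_of_map_zero f h2
  obtain ⟨g', hg'⟩ := Triangle.coyoneda_exact₁ _ hdist (𝟙 (A⟦(1 : ℤ)⟧))
    (by show 𝟙 _ ≫ (shiftFunctor C' (1 : ℤ)).map f = 0; rw [hf, Functor.map_zero, comp_zero])
  have hg'0 : g' = 0 := by
    refine t.orth ?_ ?_ g'
    · exact t.ge_iso ((shiftFunctorCompIsoId C' (1 : ℤ) (-1 : ℤ) (by ring)).app A) hA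
    · exact t.le_iso ((shiftFunctorCompIsoId C' (1 : ℤ) (-1 : ℤ) (by ring)).app B).symm
        (t.le_shift _ hB)
  have hAzero : IsZero (A⟦(1 : ℤ)⟧) := by
    rw [IsZero.iff_id_eq_zero, hg', hg'0, zero_comp]; rfl
  have hA0 : IsZero A := by
    have := (shiftFunctor C' (-1 : ℤ)).map_isZero hAzero
    exact this.of_iso ((shiftFunctorCompIsoId C' (1 : ℤ) (-1 : ℤ) (by ring)).app A).symm
  have : IsIso ((Triangle.mk f g h).mor₂) :=
    (Triangle.isZero₁_iff_isIso₂ _ hdist).1 hA0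
  exact t.le_iso (e.symm ≪≫ (shiftFunctor C' (1 : ℤ)).mapIso
    (@asIso _ _ _ _ ((Triangle.mk f g h).mor₂) this)) hB

variable (C)

/-- The key orthogonality argument: if all maps from `w≤0`-objects to `i'.obj M₁` vanish
and all maps from `w≥1`-objects to `i'.obj M₂` vanish, then any map `M₁ ⟶ M₂` vanishes,
provided `C` reflects `C'`. -/
lemma key_zero (i : C ⥤ D) [i.Full] [i.Faithful] [i.CommShift ℤ] [i.IsTriangulated]
    (i' : C' ⥤ D) [i'.Full] [i'.Faithful] [i'.CommShift ℤ] [i'.IsTriangulated]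
    (hfaithful : (restrictedYoneda C i i').Faithful)
    (w : WeightStructure C) {M₁ M₂ : C'}
    (hM₁ : ∀ X ∈ w.le, ∀ f : i.obj X ⟶ i'.obj M₁, f = 0)
    (hM₂ : ∀ X : C, X⟦(-1 : ℤ)⟧ ∈ w.ge → ∀ f : i.obj X ⟶ i'.obj M₂, f = 0)
    (φ : M₁ ⟶ M₂) : φ = 0 := by
  have key : ∀ (X : C) (u : i.obj X ⟶ i'.obj M₁), u ≫ i'.map φ = 0 := by
    intro X u
    obtain ⟨L, R, a, b, c, hdist, hL, hR⟩ := w.decomp X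
    have hdist' := i.map_distinguished _ hdist
    have hu : (i.mapTriangle.obj (Triangle.mk a b c)).mor₁ ≫ u = 0 := hM₁ L hL _
    obtain ⟨v, hv⟩ := Triangle.yoneda_exact₂ _ hdist' u hu
    rw [hv]; exact (assoc _ _ _).trans ((congrArg (fun k => (i.mapTriangle.obj (Triangle.mk a b c)).mor₂ ≫ k) (hM₂ R hR (v ≫ i'.map φ))).trans comp_zero)
  apply hfaithful.map_injective
  ext X u
  have : ((restrictedYoneda C i i').map φ).app X u = u ≫ i'.map φ := rfl
  rw [this]; refine (key _ u).trans ?_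
  have : ((restrictedYoneda C i i').map 0).app X u = u ≫ i'.map (0 : M₁ ⟶ M₂) := rfl
  rw [this, Functor.map_zero]; exact (comp_zero (f := u)).symm

/-- Transfer of orthogonality along shifts. -/
lemma shift_transfer (i : C ⥤ D) [i.CommShift ℤ] (i' : C' ⥤ D) [i'.CommShift ℤ]
    (X : C) (N : C')
    (h : ∀ f : i.obj (X⟦(-1 : ℤ)⟧) ⟶ i'.obj N, f = 0)
    (f : i.obj X ⟶ i'.obj (N⟦(1 : ℤ)⟧)) : f = 0 := by
  let e₁ : i.obj (X⟦(-1 : ℤ)⟧) ≅ (i.obj X)⟦(-1 : ℤ)⟧ := (i.commShiftIso (-1 : ℤ)).app X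
  let e₂ : i'.obj (N⟦(1 : ℤ)⟧) ≅ (i'.obj N)⟦(1 : ℤ)⟧ := (i'.commShiftIso (1 : ℤ)).app N
  let e₃ : ((i'.obj N)⟦(1 : ℤ)⟧)⟦(-1 : ℤ)⟧ ≅ i'.obj N :=
    (shiftFunctorCompIsoId D (1 : ℤ) (-1 : ℤ) (by ring)).app (i'.obj N)
  have h0 : e₁.hom ≫ (shiftFunctor D (-1 : ℤ)).map (f ≫ e₂.hom) ≫ e₃.hom = 0 := h _
  have h1 : (shiftFunctor D (-1 : ℤ)).map (f ≫ e₂.hom) = 0 := by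
    have : (shiftFunctor D (-1 : ℤ)).map (f ≫ e₂.hom) =
        e₁.inv ≫ (e₁.hom ≫ (shiftFunctor D (-1 : ℤ)).map (f ≫ e₂.hom) ≫ e₃.hom) ≫ e₃.inv := by
      simp
    rw [this, h0, zero_comp, comp_zero]
  have h2 : f ≫ e₂.hom = 0 := (shiftFunctor D (-1 : ℤ)).zero_of_map_zero _ h1
  have : f = (f ≫ e₂.hom) ≫ e₂.inv := by simp
  rw [this, h2, zero_comp]

end Auxiliary

/-- If C reflects C' in D, a t-structure on C' right orthogonal to a weight structure w on C
is strictly right orthogonal to it. -/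
theorem strictly_orthogonal_of_reflects
    (i : C ⥤ D) [i.Full] [i.Faithful] [i.CommShift ℤ] [i.IsTriangulated]
    (i' : C' ⥤ D) [i'.Full] [i'.Faithful] [i'.CommShift ℤ] [i'.IsTriangulated]
    (hfull : (restrictedYoneda C i i').Full)
    (hfaithful : (restrictedYoneda C i i').Faithful)
    (w : WeightStructure C) (t : HomTStructure C')
    (h₁ : ∀ X ∈ w.le, ∀ N : C', N⟦(-1 : ℤ)⟧ ∈ t.ge → ∀ f : i.obj X ⟶ i'.obj N, f = 0)
    (h₂ : ∀ X ∈ w.ge, ∀ N : C', N⟦(1 : ℤ)⟧ ∈ t.le → ∀ f : i.obj X ⟶ i'.obj N, f = 0) :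
    (∀ N : C', (N⟦(-1 : ℤ)⟧ ∈ t.ge ↔
      ∀ X ∈ w.le, ∀ f : i.obj X ⟶ i'.obj N, f = 0)) ∧
    (∀ N : C', (N⟦(1 : ℤ)⟧ ∈ t.le ↔
      ∀ X ∈ w.ge, ∀ f : i.obj X ⟶ i'.obj N, f = 0)) := by
  constructor
  · intro N
    constructor
    · intro hN X hX f
      exact h₁ X hX N hN f
    · intro hN
      apply t.mem_ge_of_orth
      intro B hB g
      let eN : (N⟦(-1 : ℤ)⟧)⟦(1 : ℤ)⟧ ≅ N :=
        (shiftFunctorCompIsoId C' (-1 : ℤ) (1 : ℤ) (by ring)).app N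
      have hφ : eN.inv ≫ (shiftFunctor C' (1 : ℤ)).map g = 0 := by
        refine key_zero C i i' hfaithful w hN ?_ _
        intro X hX f
        exact shift_transfer C i i' X B (fun f' => h₂ _ hX B hB f') f
      have hg1 : (shiftFunctor C' (1 : ℤ)).map g = 0 := by
        have : (shiftFunctor C' (1 : ℤ)).map g =
            eN.hom ≫ (eN.inv ≫ (shiftFunctor C' (1 : ℤ)).map g) := by simp
        rw [this, hφ, comp_zero]
      exact (shiftFunctor C' (1 : ℤ)).zero_of_map_zero g hg1
  · intro N
    constructor
    · intro hN X hX f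
      exact h₂ X hX N hN f
    · intro hN
      apply t.mem_le_of_orth
      intro A hA g
      exact key_zero C i i' hfaithful w (fun X hX f => h₁ X hX A hA f)
        (fun X hX f => shift_transfer C i i' X N (fun f' => hN _ hX f') f) g
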